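/- Let T : ℝ[x] → ℝ[x] be a linear diagonal operator, Tx^k = t_k·x^k for all k ∈ ℕ₀. If T maps polynomials nonnegative on ℝ to polynomials nonnegative on ℝ, then the linear functional L : ℝ[x] → ℝ defined by L(p) = (Tp)(1) is nonnegative on all polynomials nonnegative on ℝ, and L(x^k) = t_k for all k; consequently (t_k)_{k∈ℕ₀} is a Hamburger moment sequence. -/

import Mathlib

open MeasureTheory Polynomial

noncomputable section MomAux
open Set Function


/-- evaluation of a polynomial, as a linear map into functions -/
def pleval : Polynomial ℝ →ₗ[ℝ] (ℝ → ℝ) where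
  toFun p := fun x => p.eval x
  map_add' p q := by funext x; simp
  map_smul' c p := by funext x; simp

lemma leval_apply (p : Polynomial ℝ) (x : ℝ) : pleval p x = p.eval x := rfl

lemma leval_inj : Function.Injective pleval := by
  intro p q h
  apply Polynomial.funext
  intro x
  exact congrFun h x

/-- every real polynomial is dominated in absolute value by a polynomial -/
lemma exists_dom (p : Polynomial ℝ) : ∃ q : Polynomial ℝ, ∀ x : ℝ, |p.eval x| ≤ q.eval x := by
  induction p using Polynomial.induction_on' with
  | add f g hf hg =>
    obtain ⟨qf, hqf⟩ := hf
    obtain ⟨qg, hqg⟩ := hg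
    exact ⟨qf + qg, fun x => by
      simp only [eval_add]
      exact (abs_add_le _ _).trans (add_le_add (hqf x) (hqg x))⟩
  | monomial n a =>
    refine ⟨C |a| * (1 + X ^ (2 * n)), fun x => ?_⟩
    simp only [eval_monomial, eval_mul, eval_C, eval_add, eval_one, eval_pow, eval_X]
    rw [abs_mul, abs_pow]
    apply mul_le_mul_of_nonneg_left _ (abs_nonneg a)
    rcases le_total (|x|) 1 with h | h
    · have : |x| ^ n ≤ 1 := pow_le_one₀ (abs_nonneg x) h
      have h2 : (0:ℝ) ≤ x ^ (2*n) := by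
        rw [pow_mul]; positivity
      linarith
    · have h1 : |x| ^ n ≤ |x| ^ (2 * n) := pow_le_pow_right₀ h (by omega)
      have h2 : |x| ^ (2 * n) = x ^ (2 * n) := by
        rw [pow_mul, pow_mul, sq_abs]
      calc |x| ^ n ≤ |x| ^ (2*n) := h1
        _ = x ^ (2*n) := h2
        _ ≤ 1 + x ^ (2*n) := by linarith

/-- functions of polynomial growth -/
def Esub : Submodule ℝ (ℝ → ℝ) where
  carrier := {f | ∃ q : Polynomial ℝ, ∀ x : ℝ, |f x| ≤ q.eval x}
  add_mem' := by
    rintro f g ⟨qf, hqf⟩ ⟨qg, hqg⟩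
    exact ⟨qf + qg, fun x => by
      simp only [eval_add, Pi.add_apply]
      exact (abs_add_le _ _).trans (add_le_add (hqf x) (hqg x))⟩
  zero_mem' := ⟨0, fun x => by simp⟩
  smul_mem' := by
    rintro c f ⟨q, hq⟩
    refine ⟨C |c| * q, fun x => ?_⟩
    simp only [eval_mul, eval_C, Pi.smul_apply, smul_eq_mul, abs_mul]
    have h0 : (0:ℝ) ≤ |f x| := abs_nonneg _
    exact mul_le_mul_of_nonneg_left (hq x) (abs_nonneg c)

/-- the cone of nonnegative functions -/
def posCone : ConvexCone ℝ ↥Esub where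
  carrier := {f | ∀ x : ℝ, 0 ≤ (f : ℝ → ℝ) x}
  smul_mem' := by
    rintro c hc f hf x
    have : ((c • f : ↥Esub) : ℝ → ℝ) x = c * (f : ℝ → ℝ) x := rfl
    rw [this]
    exact mul_nonneg hc.le (hf x)
  add_mem' := by
    rintro f hf g hg x
    have : ((f + g : ↥Esub) : ℝ → ℝ) x = (f : ℝ → ℝ) x + (g : ℝ → ℝ) x := rfl
    rw [this]
    exact add_nonneg (hf x) (hg x)

lemma mem_Esub_of_poly (p : Polynomial ℝ) : pleval p ∈ Esub := exists_dom p

/-- embedding polynomials into `Esub` -/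
def embed : Polynomial ℝ →ₗ[ℝ] ↥Esub := pleval.codRestrict Esub mem_Esub_of_poly

lemma embed_inj : Function.Injective embed := by
  intro p q h
  apply leval_inj
  exact congrArg Subtype.val h

lemma embed_apply (p : Polynomial ℝ) (x : ℝ) : ((embed p : ↥Esub) : ℝ → ℝ) x = p.eval x := rfl

/-- extension of a positive functional on polynomials to all of `Esub` -/
lemma exists_ext (L : Polynomial ℝ →ₗ[ℝ] ℝ)
    (hL : ∀ p : Polynomial ℝ, (∀ x : ℝ, 0 ≤ p.eval x) → 0 ≤ L p) :
    ∃ g : ↥Esub →ₗ[ℝ] ℝ, (∀ p : Polynomial ℝ, g (embed p) = L p) ∧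
      ∀ f : ↥Esub, (∀ x : ℝ, 0 ≤ (f : ℝ → ℝ) x) → 0 ≤ g f := by
  set e : Polynomial ℝ ≃ₗ[ℝ] LinearMap.range embed := LinearEquiv.ofInjective embed embed_inj
  set pm : ↥Esub →ₗ.[ℝ] ℝ := ⟨LinearMap.range embed, L.comp e.symm.toLinearMap⟩ with hpm
  have hdom : pm.domain = LinearMap.range embed := rfl
  have hval : ∀ p : Polynomial ℝ, ∀ h : (embed p : ↥Esub) ∈ pm.domain,
      pm ⟨embed p, h⟩ = L p := by
    intro p h
    have : e.symm ⟨embed p, h⟩ = p := by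
      apply e.injective
      apply Subtype.ext
      simp [e, LinearEquiv.ofInjective_apply]
    show L (e.symm ⟨embed p, h⟩) = L p
    rw [this]
  obtain ⟨g, hg1, hg2⟩ := riesz_extension (posCone.toPointedCone (show ∀ x : ℝ, (0:ℝ) ≤ ((0:↥Esub) : ℝ → ℝ) x from fun x => le_rfl)) pm
    (by
      rintro ⟨x, hx⟩ hmem
      obtain ⟨p, rfl⟩ := hx
      rw [hval p ⟨p, rfl⟩]
      exact hL p fun y => ((ConvexCone.mem_toPointedCone _ _).1 hmem) y)
    (by
      intro y
      obtain ⟨q, hq⟩ := y.2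
      refine ⟨⟨embed q, ⟨q, rfl⟩⟩, (ConvexCone.mem_toPointedCone _ _).2 fun x => ?_⟩
      show 0 ≤ ((embed q : ↥Esub) : ℝ → ℝ) x + (y : ℝ → ℝ) x
      have h1 := (abs_le.1 (hq x)).1
      have h2 : ((embed q : ↥Esub) : ℝ → ℝ) x = q.eval x := rfl
      rw [h2]
      linarith)
  refine ⟨g, fun p => ?_, fun f hf => hg2 f ((ConvexCone.mem_toPointedCone _ _).2 hf)⟩
  rw [hg1 ⟨embed p, ⟨p, rfl⟩⟩]
  exact hval p _


/-! ### The distribution function and its measure -/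

lemma mem_Esub_indicator (s : Set ℝ) (f : ℝ → ℝ) (q : Polynomial ℝ)
    (hq : ∀ x, |f x| ≤ q.eval x) : s.indicator f ∈ Esub := by
  refine ⟨q, fun x => ?_⟩
  by_cases h : x ∈ s
  · rw [Set.indicator_of_mem h]; exact hq x
  · rw [Set.indicator_of_notMem h]
    simpa using (abs_nonneg (f x)).trans (hq x)

def indIic (c : ℝ) : ↥Esub :=
  ⟨(Iic c).indicator fun _ => (1:ℝ), mem_Esub_indicator _ _ 1 (fun x => by simp)⟩

def indIoc (a b : ℝ) : ↥Esub :=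
  ⟨(Ioc a b).indicator fun _ => (1:ℝ), mem_Esub_indicator _ _ 1 (fun x => by simp)⟩

def pInd (p : Polynomial ℝ) (a b : ℝ) : ↥Esub :=
  ⟨(Ioc a b).indicator fun x => p.eval x,
    mem_Esub_indicator _ _ (exists_dom p).choose (exists_dom p).choose_spec⟩

variable (g : ↥Esub →ₗ[ℝ] ℝ)

def Ff : ℝ → ℝ := fun c => g (indIic c)

variable (hgpos : ∀ f : ↥Esub, (∀ x : ℝ, 0 ≤ (f : ℝ → ℝ) x) → 0 ≤ g f)

section WithPos
include hgpos

lemma gmono : ∀ f₁ f₂ : ↥Esub, (∀ x, (f₁ : ℝ → ℝ) x ≤ (f₂ : ℝ → ℝ) x) → g f₁ ≤ g f₂ := by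
  intro f₁ f₂ h
  have h0 : 0 ≤ g (f₂ - f₁) := by
    apply hgpos
    intro x
    have : ((f₂ - f₁ : ↥Esub) : ℝ → ℝ) x = (f₂ : ℝ → ℝ) x - (f₁ : ℝ → ℝ) x := rfl
    rw [this]
    linarith [h x]
  rw [map_sub] at h0
  linarith

lemma Ff_mono : Monotone (Ff g) := by
  intro a b hab
  apply gmono g hgpos
  intro x
  exact Set.indicator_le_indicator_of_subset (Iic_subset_Iic.2 hab) (fun _ => zero_le_one) x

def Gf : StieltjesFunction ℝ := (Ff_mono g hgpos).stieltjesFunction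

def μf : Measure ℝ := (Gf g hgpos).measure

lemma Gf_eq {c : ℝ} (hc : ContinuousAt (Ff g) c) : Gf g hgpos c = Ff g c := by
  have : Gf g hgpos c = Function.rightLim (Ff g) c := rfl
  rw [this]
  exact rightLim_eq_of_tendsto
    (hc.tendsto.mono_left nhdsWithin_le_nhds)

lemma Ff_nonneg (c : ℝ) : 0 ≤ Ff g c :=
  hgpos _ (fun x => Set.indicator_nonneg (fun _ _ => zero_le_one) x)

lemma Gf_nonneg (c : ℝ) : 0 ≤ Gf g hgpos c :=
  (Ff_nonneg g hgpos c).trans ((Ff_mono g hgpos).le_rightLim le_rfl)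

lemma Gf_le (M : ℝ) (hM : ∀ c, Ff g c ≤ M) (c : ℝ) : Gf g hgpos c ≤ M :=
  ((Ff_mono g hgpos).rightLim_le (lt_add_one c)).trans (hM (c+1))

lemma μf_Ioc (a b : ℝ) : μf g hgpos (Ioc a b) = ENNReal.ofReal (Gf g hgpos b - Gf g hgpos a) :=
  StieltjesFunction.measure_Ioc _ a b

lemma μf_Ioc_ne_top (a b : ℝ) : μf g hgpos (Ioc a b) ≠ ⊤ := by
  rw [μf_Ioc]; exact ENNReal.ofReal_ne_top

lemma μf_Ioc_toReal {a b : ℝ} (hab : a ≤ b) (ha : ContinuousAt (Ff g) a)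
    (hb : ContinuousAt (Ff g) b) :
    (μf g hgpos (Ioc a b)).toReal = Ff g b - Ff g a := by
  rw [μf_Ioc, Gf_eq g hgpos ha, Gf_eq g hgpos hb]
  exact ENNReal.toReal_ofReal (by linarith [Ff_mono g hgpos hab])

omit hgpos in
lemma g_indIoc {a b : ℝ} (hab : a ≤ b) : g (indIoc a b) = Ff g b - Ff g a := by
  have key : indIoc a b = indIic b - indIic a := by
    apply Subtype.ext
    funext x
    have : ((indIic b - indIic a : ↥Esub) : ℝ → ℝ) x
        = (Iic b).indicator (fun _ => (1:ℝ)) x - (Iic a).indicator (fun _ => (1:ℝ)) x := rfl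
    rw [this]
    show (Ioc a b).indicator (fun _ => (1:ℝ)) x = _
    rcases le_or_gt x a with h | h
    · rw [Set.indicator_of_notMem (by simp [Set.mem_Ioc]; intro hx; linarith),
        Set.indicator_of_mem (by simp [h.trans hab]), Set.indicator_of_mem (by simp [h])]
      ring
    · rcases le_or_gt x b with h2 | h2
      · rw [Set.indicator_of_mem (by simp [Set.mem_Ioc, h, h2]),
          Set.indicator_of_mem (by simp [h2]), Set.indicator_of_notMem (by simp [h])]
        ring
      · rw [Set.indicator_of_notMem (by simp [Set.mem_Ioc]; intro hx; linarith),
          Set.indicator_of_notMem (by simp [h2]), Set.indicator_of_notMem (by simp [h])]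
        ring
  rw [key, map_sub]
  rfl


omit hgpos in
lemma pInd_coe (p : Polynomial ℝ) (a b x : ℝ) :
    ((pInd p a b : ↥Esub) : ℝ → ℝ) x = (Ioc a b).indicator (fun y => p.eval y) x := rfl

omit hgpos in
lemma indIoc_coe (a b x : ℝ) :
    ((indIoc a b : ↥Esub) : ℝ → ℝ) x = (Ioc a b).indicator (fun _ => (1:ℝ)) x := rfl

lemma locFin : IsLocallyFiniteMeasure (μf g hgpos) := by
  unfold μf
  infer_instance

lemma intOn (p : Polynomial ℝ) (a b : ℝ) :
    IntegrableOn (fun x => p.eval x) (Ioc a b) (μf g hgpos) := by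
  haveI := locFin g hgpos
  exact (Polynomial.continuous p).integrableOn_Ioc

lemma single_est (p : Polynomial ℝ) (hp : ∀ x, 0 ≤ p.eval x) {a b ε : ℝ} (hab : a ≤ b)
    (hε : 0 < ε) (ha : ContinuousAt (Ff g) a) (hb : ContinuousAt (Ff g) b)
    (hosc : ∀ x ∈ Ioc a b, |p.eval x - p.eval b| ≤ ε) :
    g (pInd p a b) ≤ (∫ x in Ioc a b, p.eval x ∂(μf g hgpos))
        + 2*ε*((μf g hgpos) (Ioc a b)).toReal ∧
    (∫ x in Ioc a b, p.eval x ∂(μf g hgpos)) ≤ g (pInd p a b)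
        + 2*ε*((μf g hgpos) (Ioc a b)).toReal := by
  have hμtop := μf_Ioc_ne_top g hgpos a b
  have htr : ((μf g hgpos) (Ioc a b)).toReal = Ff g b - Ff g a :=
    μf_Ioc_toReal g hgpos hab ha hb
  have hioI := intOn g hgpos p a b
  have hconst : ∀ c : ℝ, IntegrableOn (fun _ => c) (Ioc a b) (μf g hgpos) := fun c =>
    integrableOn_const hμtop
  have hle1 : ∀ x ∈ Ioc a b, p.eval x ≤ p.eval b + ε := by
    intro x hx
    have := abs_le.1 (hosc x hx)
    linarith [this.2]
  have hle2 : ∀ x ∈ Ioc a b, p.eval b + ε ≤ p.eval x + 2*ε := by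
    intro x hx
    have := abs_le.1 (hosc x hx)
    linarith [this.1]
  have hbε : 0 ≤ p.eval b + ε := by linarith [hp b]
  constructor
  · have h1 : g (pInd p a b) ≤ g ((p.eval b + ε) • indIoc a b) := by
      apply gmono g hgpos
      intro x
      rw [pInd_coe]
      have : (((p.eval b + ε) • indIoc a b : ↥Esub) : ℝ → ℝ) x
          = (p.eval b + ε) * (Ioc a b).indicator (fun _ => (1:ℝ)) x := rfl
      rw [this]
      by_cases hx : x ∈ Ioc a b
      · rw [Set.indicator_of_mem hx, Set.indicator_of_mem hx, mul_one]
        exact hle1 x hx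
      · rw [Set.indicator_of_notMem hx, Set.indicator_of_notMem hx, mul_zero]
    rw [LinearMap.map_smul, smul_eq_mul, g_indIoc g hab, ← htr] at h1
    have h2 : (p.eval b + ε) * ((μf g hgpos) (Ioc a b)).toReal
        = ∫ _x in Ioc a b, (p.eval b + ε) ∂(μf g hgpos) := by
      rw [setIntegral_const, smul_eq_mul, mul_comm, measureReal_def]
    have h3 : (∫ _x in Ioc a b, (p.eval b + ε) ∂(μf g hgpos))
        ≤ ∫ x in Ioc a b, (p.eval x + 2*ε) ∂(μf g hgpos) := by
      apply setIntegral_mono_on (hconst _) (hioI.add (hconst _)) measurableSet_Ioc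
      exact hle2
    have h4 : (∫ x in Ioc a b, (p.eval x + 2*ε) ∂(μf g hgpos))
        = (∫ x in Ioc a b, p.eval x ∂(μf g hgpos))
          + 2*ε*((μf g hgpos) (Ioc a b)).toReal := by
      rw [integral_add hioI (hconst _), setIntegral_const, smul_eq_mul, mul_comm, measureReal_def]
    linarith
  · have h1 : (∫ x in Ioc a b, p.eval x ∂(μf g hgpos))
        ≤ ∫ _x in Ioc a b, (p.eval b + ε) ∂(μf g hgpos) := by
      apply setIntegral_mono_on hioI (hconst _) measurableSet_Ioc
      exact hle1
    have h2 : (∫ _x in Ioc a b, (p.eval b + ε) ∂(μf g hgpos))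
        = (p.eval b + ε) * ((μf g hgpos) (Ioc a b)).toReal := by
      rw [setIntegral_const, smul_eq_mul, mul_comm, measureReal_def]
    have h3 : (p.eval b + ε) * ((μf g hgpos) (Ioc a b)).toReal
        = g ((p.eval b + ε) • indIoc a b) := by
      rw [LinearMap.map_smul, smul_eq_mul, g_indIoc g hab, ← htr]
    have h4 : g ((p.eval b + ε) • indIoc a b) ≤ g (pInd p a b + (2*ε) • indIoc a b) := by
      apply gmono g hgpos
      intro x
      have hL : (((p.eval b + ε) • indIoc a b : ↥Esub) : ℝ → ℝ) x
          = (p.eval b + ε) * (Ioc a b).indicator (fun _ => (1:ℝ)) x := rfl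
      have hR : ((pInd p a b + (2*ε) • indIoc a b : ↥Esub) : ℝ → ℝ) x
          = (Ioc a b).indicator (fun y => p.eval y) x
            + 2*ε * (Ioc a b).indicator (fun _ => (1:ℝ)) x := rfl
      rw [hL, hR]
      by_cases hx : x ∈ Ioc a b
      · rw [Set.indicator_of_mem hx, Set.indicator_of_mem hx, mul_one, mul_one]
        exact hle2 x hx
      · rw [Set.indicator_of_notMem hx, Set.indicator_of_notMem hx, mul_zero, mul_zero]
        simp
    have h5 : g (pInd p a b + (2*ε) • indIoc a b)
        = g (pInd p a b) + 2*ε*((μf g hgpos) (Ioc a b)).toReal := by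
      rw [map_add, LinearMap.map_smul, smul_eq_mul, g_indIoc g hab, ← htr]
    linarith

omit hgpos in
lemma pInd_split (p : Polynomial ℝ) {a m b : ℝ} (ham : a ≤ m) (hmb : m ≤ b) :
    pInd p a b = pInd p a m + pInd p m b := by
  apply Subtype.ext
  funext x
  have hR : ((pInd p a m + pInd p m b : ↥Esub) : ℝ → ℝ) x
      = (Ioc a m).indicator (fun y => p.eval y) x + (Ioc m b).indicator (fun y => p.eval y) x :=
    rfl
  rw [hR]
  show (Ioc a b).indicator (fun y => p.eval y) x = _
  rw [← Set.Ioc_union_Ioc_eq_Ioc ham hmb,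
    Set.indicator_union_of_disjoint (Set.Ioc_disjoint_Ioc_of_le le_rfl)]

lemma riemann_est (p : Polynomial ℝ) (hp : ∀ x, 0 ≤ p.eval x) (a₀ b₀ ε δ : ℝ) (hε : 0 < ε)
    (hδ : 0 < δ) (hdense : Dense {x : ℝ | ContinuousAt (Ff g) x})
    (hUC : ∀ x ∈ Icc a₀ b₀, ∀ y ∈ Icc a₀ b₀, |x - y| ≤ δ → |p.eval x - p.eval y| ≤ ε) :
    ∀ n : ℕ, ∀ a b : ℝ, a₀ ≤ a → b ≤ b₀ → a ≤ b →
      ContinuousAt (Ff g) a → ContinuousAt (Ff g) b → b - a ≤ n * (δ/2) →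
      g (pInd p a b) ≤ (∫ x in Ioc a b, p.eval x ∂(μf g hgpos))
          + 2*ε*((μf g hgpos) (Ioc a b)).toReal ∧
      (∫ x in Ioc a b, p.eval x ∂(μf g hgpos)) ≤ g (pInd p a b)
          + 2*ε*((μf g hgpos) (Ioc a b)).toReal := by
  intro n
  induction n with
  | zero =>
    intro a b h1 h2 h3 _ _ h6
    have hab : a = b := le_antisymm h3 (by simp at h6; linarith)
    subst hab
    have h0 : pInd p a a = 0 := by
      apply Subtype.ext
      funext x
      show (Ioc a a).indicator (fun y => p.eval y) x = 0
      simp [Set.Ioc_self]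
    rw [h0, map_zero]
    simp [Set.Ioc_self]
  | succ n ih =>
    intro a b h1 h2 h3 ha hb h6
    by_cases hsmall : b - a ≤ δ
    · apply single_est g hgpos p hp h3 hε ha hb
      intro x hx
      have hx1 := hx.1
      have hx2 := hx.2
      apply hUC x ⟨by linarith, by linarith⟩ b ⟨by linarith, h2⟩
      rw [abs_sub_comm, abs_of_nonneg (by linarith)]
      linarith
    · push_neg at hsmall
      obtain ⟨m, hmC, hm⟩ := hdense.exists_mem_open isOpen_Ioo
        (Set.nonempty_Ioo.2 (show b - δ < b - δ/2 by linarith))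
      have hm1 : b - δ < m := hm.1
      have hm2 : m < b - δ/2 := hm.2
      have ham : a ≤ m := by linarith
      have hmb : m ≤ b := by linarith
      obtain ⟨ih1, ih2⟩ := ih a m h1 (by linarith) ham ha hmC (by push_cast at h6 ⊢; linarith)
      obtain ⟨s1, s2⟩ : g (pInd p m b) ≤ (∫ x in Ioc m b, p.eval x ∂(μf g hgpos))
            + 2*ε*((μf g hgpos) (Ioc m b)).toReal ∧
          (∫ x in Ioc m b, p.eval x ∂(μf g hgpos)) ≤ g (pInd p m b)
            + 2*ε*((μf g hgpos) (Ioc m b)).toReal := by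
        apply single_est g hgpos p hp hmb hε hmC hb
        intro x hx
        have hx1 := hx.1
        have hx2 := hx.2
        apply hUC x ⟨by linarith, by linarith⟩ b ⟨by linarith, h2⟩
        rw [abs_sub_comm, abs_of_nonneg (by linarith)]
        linarith
      have hsplit := pInd_split p ham hmb
      have hμ : ((μf g hgpos) (Ioc a b)).toReal
          = ((μf g hgpos) (Ioc a m)).toReal + ((μf g hgpos) (Ioc m b)).toReal := by
        rw [← Set.Ioc_union_Ioc_eq_Ioc ham hmb,
          measure_union (Set.Ioc_disjoint_Ioc_of_le le_rfl) measurableSet_Ioc,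
          ENNReal.toReal_add (μf_Ioc_ne_top g hgpos a m) (μf_Ioc_ne_top g hgpos m b)]
      have hint : (∫ x in Ioc a b, p.eval x ∂(μf g hgpos))
          = (∫ x in Ioc a m, p.eval x ∂(μf g hgpos))
            + (∫ x in Ioc m b, p.eval x ∂(μf g hgpos)) := by
        rw [← Set.Ioc_union_Ioc_eq_Ioc ham hmb]
        exact setIntegral_union (Set.Ioc_disjoint_Ioc_of_le le_rfl) measurableSet_Ioc
          (intOn g hgpos p a m) (intOn g hgpos p m b)
      rw [hsplit, map_add, hint, hμ]
      constructor
      · linarith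
      · linarith

end WithPos

/-! ### Main representation theorem -/

theorem nonneg_functional_is_moment (L : Polynomial ℝ →ₗ[ℝ] ℝ)
    (hL : ∀ p : Polynomial ℝ, (∀ x : ℝ, 0 ≤ p.eval x) → 0 ≤ L p) :
    ∃ μ : Measure ℝ, ∀ p : Polynomial ℝ,
      Integrable (fun x => p.eval x) μ ∧ L p = ∫ x, p.eval x ∂μ := by
  classical
  obtain ⟨g, hgL, hgpos⟩ := exists_ext L hL
  have hdense : Dense {x : ℝ | ContinuousAt (Ff g) x} := by
    have hc : {x : ℝ | ¬ ContinuousAt (Ff g) x}.Countable :=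
      (Ff_mono g hgpos).countable_not_continuousAt
    have hd := hc.dense_compl ℝ
    simpa [Set.compl_setOf, not_not] using hd
  -- choice of good cut points
  have hpicka : ∀ n : ℕ, ∃ a : ℝ, a ∈ Ioo (-(n:ℝ)-2) (-(n:ℝ)-1) ∧ ContinuousAt (Ff g) a := by
    intro n
    obtain ⟨a, haC, ha⟩ := hdense.exists_mem_open isOpen_Ioo
      (Set.nonempty_Ioo.2 (show -(n:ℝ)-2 < -(n:ℝ)-1 by linarith))
    exact ⟨a, ha, haC⟩
  have hpickb : ∀ n : ℕ, ∃ b : ℝ, b ∈ Ioo ((n:ℝ)+1) ((n:ℝ)+2) ∧ ContinuousAt (Ff g) b := by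
    intro n
    obtain ⟨b, hbC, hb⟩ := hdense.exists_mem_open isOpen_Ioo
      (Set.nonempty_Ioo.2 (show (n:ℝ)+1 < (n:ℝ)+2 by linarith))
    exact ⟨b, hb, hbC⟩
  choose aseq haseq haC using hpicka
  choose bseq hbseq hbC using hpickb
  have haneg : ∀ n : ℕ, aseq n < -(n:ℝ)-1 := fun n => (haseq n).2
  have hapos : ∀ n : ℕ, -(n:ℝ)-2 < aseq n := fun n => (haseq n).1
  have hbpos : ∀ n : ℕ, (n:ℝ)+1 < bseq n := fun n => (hbseq n).1
  have hblt : ∀ n : ℕ, bseq n < (n:ℝ)+2 := fun n => (hbseq n).2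
  have hab : ∀ n : ℕ, aseq n ≤ bseq n := by
    intro n
    have h1 := haneg n
    have h2 := hbpos n
    have : (0:ℝ) ≤ (n:ℝ) := Nat.cast_nonneg n
    linarith
  have haanti : ∀ n m : ℕ, n ≤ m → aseq m ≤ aseq n := by
    intro n m hnm
    rcases eq_or_lt_of_le hnm with rfl | h
    · exact le_rfl
    · have h1 := haneg m
      have h2 := hapos n
      have : (n:ℝ) + 1 ≤ (m:ℝ) := by exact_mod_cast h
      linarith
  have hbmono : ∀ n m : ℕ, n ≤ m → bseq n ≤ bseq m := by
    intro n m hnm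
    rcases eq_or_lt_of_le hnm with rfl | h
    · exact le_rfl
    · have h1 := hblt n
      have h2 := hbpos m
      have : (n:ℝ) + 1 ≤ (m:ℝ) := by exact_mod_cast h
      linarith
  -- exact identity on good intervals
  have hAll : ∀ p : Polynomial ℝ, (∀ x, 0 ≤ p.eval x) → ∀ a b : ℝ, a ≤ b →
      ContinuousAt (Ff g) a → ContinuousAt (Ff g) b →
      g (pInd p a b) = ∫ x in Ioc a b, p.eval x ∂(μf g hgpos) := by
    intro p hp a b hab' ha hb
    have hM0 : 0 ≤ ((μf g hgpos) (Ioc a b)).toReal := ENNReal.toReal_nonneg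
    have key : ∀ ε : ℝ, 0 < ε →
        g (pInd p a b) ≤ (∫ x in Ioc a b, p.eval x ∂(μf g hgpos))
          + 2*ε*((μf g hgpos) (Ioc a b)).toReal ∧
        (∫ x in Ioc a b, p.eval x ∂(μf g hgpos)) ≤ g (pInd p a b)
          + 2*ε*((μf g hgpos) (Ioc a b)).toReal := by
      intro ε hε
      have hucon : UniformContinuousOn (fun x => p.eval x) (Icc a b) :=
        isCompact_Icc.uniformContinuousOn_of_continuous (Polynomial.continuous p).continuousOn
      obtain ⟨δ, hδ ,hδc⟩ := Metric.uniformContinuousOn_iff.1 hucon ε hε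
      have hδ2 : 0 < δ/2 := by linarith
      obtain ⟨n, hn⟩ := exists_nat_ge ((b - a)/(δ/2/2))
      refine riemann_est g hgpos p hp a b ε (δ/2) hε hδ2 hdense ?_ n a b le_rfl le_rfl hab' ha hb ?_
      · intro x hx y hy hxy
        have := hδc x hx y hy (by rw [Real.dist_eq]; linarith)
        rw [Real.dist_eq] at this
        linarith
      · have hpos4 : (0:ℝ) < δ/2/2 := by linarith
        calc b - a = ((b-a)/(δ/2/2)) * (δ/2/2) := by field_simp
          _ ≤ (n:ℝ) * (δ/2/2) := by
            apply mul_le_mul_of_nonneg_right hn hpos4.le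
          _ = (n:ℝ) * (δ/2/2) := rfl
    apply le_antisymm
    · apply le_of_forall_pos_le_add
      intro ε' hε'
      set M := ((μf g hgpos) (Ioc a b)).toReal
      have hM1 : (0:ℝ) < 2*M + 1 := by dsimp [M] at *; linarith
      have h := (key (ε'/(2*M+1)) (by positivity)).1
      have : 2*(ε'/(2*M+1))*M ≤ ε' := by
        calc 2*(ε'/(2*M+1))*M = ε' * (2*M) / (2*M+1) := by ring
          _ ≤ ε' := by
            rw [div_le_iff₀ hM1]
            nlinarith
      linarith
    · apply le_of_forall_pos_le_add
      intro ε' hε'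
      set M := ((μf g hgpos) (Ioc a b)).toReal
      have hM1 : (0:ℝ) < 2*M + 1 := by dsimp [M] at *; linarith
      have h := (key (ε'/(2*M+1)) (by positivity)).2
      have : 2*(ε'/(2*M+1))*M ≤ ε' := by
        calc 2*(ε'/(2*M+1))*M = ε' * (2*M) / (2*M+1) := by ring
          _ ≤ ε' := by
            rw [div_le_iff₀ hM1]
            nlinarith
      linarith
  -- the key statement for nonnegative polynomials
  have key : ∀ p : Polynomial ℝ, (∀ x, 0 ≤ p.eval x) →
      Integrable (fun x => p.eval x) (μf g hgpos) ∧
        L p = ∫ x, p.eval x ∂(μf g hgpos) := by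
    intro p hp
    have hLp : 0 ≤ L p := hL p hp
    -- pInd ≤ p
    have hIndLe : ∀ a b : ℝ, g (pInd p a b) ≤ L p := by
      intro a b
      rw [← hgL p]
      apply gmono g hgpos
      intro x
      rw [pInd_coe]
      have : ((embed p : ↥Esub) : ℝ → ℝ) x = p.eval x := rfl
      rw [this]
      exact Set.indicator_le_self' (fun y _ => hp y) x
    -- integrability via lintegral
    have hmeasp : Measurable (fun x : ℝ => ENNReal.ofReal (p.eval x)) :=
      ENNReal.measurable_ofReal.comp (Polynomial.continuous p).measurable
    have hsetlt : ∀ n : ℕ, ∫⁻ x in Ioc (aseq n) (bseq n), ENNReal.ofReal (p.eval x) ∂(μf g hgpos)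
        ≤ ENNReal.ofReal (L p) := by
      intro n
      have hio := intOn g hgpos p (aseq n) (bseq n)
      rw [← ofReal_integral_eq_lintegral_ofReal hio
        (Filter.Eventually.of_forall fun x => hp x)]
      apply ENNReal.ofReal_le_ofReal
      rw [← hAll p hp _ _ (hab n) (haC n) (hbC n)]
      exact hIndLe _ _
    have hlint : ∫⁻ x, ENNReal.ofReal (p.eval x) ∂(μf g hgpos) ≤ ENNReal.ofReal (L p) := by
      have hmono : Monotone (fun n : ℕ => (Ioc (aseq n) (bseq n)).indicator
          (fun x => ENNReal.ofReal (p.eval x))) := by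
        intro n m hnm
        intro x
        exact Set.indicator_le_indicator_of_subset
          (Set.Ioc_subset_Ioc (haanti n m hnm) (hbmono n m hnm)) (fun _ => zero_le) x
      have hcover : (fun x : ℝ => ENNReal.ofReal (p.eval x))
          = fun x => ⨆ n : ℕ, (Ioc (aseq n) (bseq n)).indicator
            (fun y => ENNReal.ofReal (p.eval y)) x := by
        funext x
        apply le_antisymm
        · obtain ⟨n, hn⟩ := exists_nat_ge |x|
          have hx1 : aseq n < x := by
            have h1 := haneg n
            have h3 : -|x| ≤ x := neg_abs_le x
            linarith
          have hx2 : x ≤ bseq n := by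
            have h1 := hbpos n
            have h2 : x ≤ |x| := le_abs_self x
            linarith
          calc ENNReal.ofReal (p.eval x)
              = (Ioc (aseq n) (bseq n)).indicator (fun y => ENNReal.ofReal (p.eval y)) x := by
                rw [Set.indicator_of_mem (Set.mem_Ioc.2 ⟨hx1, hx2⟩)]
            _ ≤ _ := le_iSup (fun n => (Ioc (aseq n) (bseq n)).indicator
                (fun y => ENNReal.ofReal (p.eval y)) x) n
        · apply iSup_le
          intro n
          exact Set.indicator_le_self' (fun y _ => zero_le) x
      rw [hcover, lintegral_iSup (fun n => (hmeasp.indicator measurableSet_Ioc)) hmono]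
      apply iSup_le
      intro n
      rw [lintegral_indicator measurableSet_Ioc]
      exact hsetlt n
    have hInt : Integrable (fun x => p.eval x) (μf g hgpos) := by
      refine ⟨(Polynomial.continuous p).aestronglyMeasurable, ?_⟩
      rw [hasFiniteIntegral_iff_norm]
      have : (fun x : ℝ => ENNReal.ofReal ‖p.eval x‖) = fun x => ENNReal.ofReal (p.eval x) := by
        funext x
        rw [Real.norm_eq_abs, abs_of_nonneg (hp x)]
      rw [this]
      exact lt_of_le_of_lt hlint ENNReal.ofReal_lt_top
    refine ⟨hInt, le_antisymm ?_ ?_⟩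
    · -- L p ≤ ∫ p
      have C0 : 0 ≤ L (p * X^2) := by
        apply hL
        intro x
        rw [eval_mul, eval_pow, eval_X]
        exact mul_nonneg (hp x) (sq_nonneg x)
      have hnbound : ∀ n : ℕ, L p ≤ (∫ x, p.eval x ∂(μf g hgpos))
          + (1/((n:ℝ)+1)^2) * L (p * X^2) := by
        intro n
        have hstep : g (embed p) ≤ g (pInd p (aseq n) (bseq n)
            + (1/((n:ℝ)+1)^2) • embed (p * X^2)) := by
          apply gmono g hgpos
          intro x
          have hLc : ((embed p : ↥Esub) : ℝ → ℝ) x = p.eval x := rfl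
          have hRc : ((pInd p (aseq n) (bseq n)
              + (1/((n:ℝ)+1)^2) • embed (p * X^2) : ↥Esub) : ℝ → ℝ) x
              = (Ioc (aseq n) (bseq n)).indicator (fun y => p.eval y) x
                + (1/((n:ℝ)+1)^2) * (p * X^2).eval x := rfl
          rw [hLc, hRc, eval_mul, eval_pow, eval_X]
          by_cases hx : x ∈ Ioc (aseq n) (bseq n)
          · rw [Set.indicator_of_mem hx]
            have : 0 ≤ (1/((n:ℝ)+1)^2) * (p.eval x * x^2) :=
              mul_nonneg (by positivity) (mul_nonneg (hp x) (sq_nonneg x))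
            linarith
          · rw [Set.indicator_of_notMem hx]
            have hxout : ((n:ℝ)+1)^2 ≤ x^2 := by
              rw [Set.mem_Ioc, not_and_or] at hx
              push_neg at hx
              rcases hx with hx | hx
              · have h1 := haneg n
                nlinarith
              · have h1 := hbpos n
                nlinarith
            have hn1 : (0:ℝ) < ((n:ℝ)+1)^2 := by positivity
            rw [zero_add, one_div, ← mul_assoc]
            rw [inv_mul_eq_div, div_mul_eq_mul_div, le_div_iff₀ hn1]
            nlinarith [hp x]
        rw [map_add, LinearMap.map_smul, smul_eq_mul, hgL p, hgL (p * X^2),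
          hAll p hp _ _ (hab n) (haC n) (hbC n)] at hstep
        have hsetle : (∫ x in Ioc (aseq n) (bseq n), p.eval x ∂(μf g hgpos))
            ≤ ∫ x, p.eval x ∂(μf g hgpos) :=
          setIntegral_le_integral hInt (Filter.Eventually.of_forall fun x => hp x)
        linarith
      apply le_of_forall_pos_le_add
      intro ε hε
      obtain ⟨n, hn⟩ := exists_nat_ge (L (p * X^2) / ε)
      have h := hnbound n
      have hC : L (p * X^2) ≤ ε * ((n:ℝ)+1)^2 := by
        have h1 : L (p * X^2) ≤ ε * n := by
          rw [div_le_iff₀ hε] at hn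
          linarith [hn]
        nlinarith [Nat.cast_nonneg (α := ℝ) n]
      have hn2 : (0:ℝ) < ((n:ℝ)+1)^2 := by positivity
      have : (1/((n:ℝ)+1)^2) * L (p * X^2) ≤ ε := by
        rw [one_div, inv_mul_eq_div, div_le_iff₀ hn2]
        nlinarith
      linarith
    · -- ∫ p ≤ L p
      have hLp' : 0 ≤ L p := hLp
      rw [integral_eq_lintegral_of_nonneg_ae (Filter.Eventually.of_forall hp)
        (Polynomial.continuous p).aestronglyMeasurable]
      calc (∫⁻ x, ENNReal.ofReal (p.eval x) ∂(μf g hgpos)).toReal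
          ≤ (ENNReal.ofReal (L p)).toReal :=
            ENNReal.toReal_mono ENNReal.ofReal_ne_top hlint
        _ = L p := ENNReal.toReal_ofReal hLp'
  -- extend to all polynomials
  refine ⟨μf g hgpos, fun p => ?_⟩
  obtain ⟨q, hq⟩ := exists_dom p
  have hq0 : ∀ x, 0 ≤ q.eval x := fun x => (abs_nonneg _).trans (hq x)
  have hpq0 : ∀ x, 0 ≤ (p + q).eval x := by
    intro x
    rw [eval_add]
    have := neg_abs_le (p.eval x)
    have := hq x
    linarith
  obtain ⟨hint1, heq1⟩ := key (p + q) hpq0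
  obtain ⟨hint2, heq2⟩ := key q hq0
  have hfun : (fun x => p.eval x) = (fun x => (p+q).eval x) - (fun x => q.eval x) := by
    funext x
    simp [eval_add]
  constructor
  · rw [hfun]
    exact hint1.sub hint2
  · have hLsplit : L p = L (p + q) - L q := by
      rw [map_add]; ring
    rw [hLsplit, heq1, heq2, ← integral_sub hint1 hint2]
    apply integral_congr_ae
    apply Filter.Eventually.of_forall
    intro x
    simp [eval_add]

end MomAux

theorem diagonal_posPreserver_moment_sequence
    (t : ℕ → ℝ) (T : Polynomial ℝ →ₗ[ℝ] Polynomial ℝ)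
    (hdiag : ∀ k : ℕ, T (X ^ k) = t k • X ^ k)
    (hpos : ∀ p : Polynomial ℝ, (∀ x : ℝ, 0 ≤ p.eval x) → ∀ x : ℝ, 0 ≤ (T p).eval x) :
    (∀ p : Polynomial ℝ, (∀ x : ℝ, 0 ≤ p.eval x) → 0 ≤ (T p).eval 1) ∧
    (∀ k : ℕ, (T (X ^ k)).eval 1 = t k) ∧
    (∃ μ : Measure ℝ, ∀ k : ℕ,
      Integrable (fun x => x ^ k) μ ∧ t k = ∫ x, x ^ k ∂μ) := by
  set Lmap : Polynomial ℝ →ₗ[ℝ] ℝ := (Polynomial.leval (1:ℝ)).comp T with hLmap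
  have hLapp : ∀ p : Polynomial ℝ, Lmap p = (T p).eval 1 := fun p => rfl
  have hL : ∀ p : Polynomial ℝ, (∀ x : ℝ, 0 ≤ p.eval x) → 0 ≤ Lmap p := fun p hp => by
    rw [hLapp]; exact hpos p hp 1
  refine ⟨fun p hp => hpos p hp 1, fun k => by rw [hdiag k]; simp, ?_⟩
  obtain ⟨μ, hμ⟩ := nonneg_functional_is_moment Lmap hL
  refine ⟨μ, fun k => ?_⟩
  obtain ⟨h1, h2⟩ := hμ (X ^ k)
  have hfun : (fun x : ℝ => Polynomial.eval x (X ^ k)) = fun x : ℝ => x ^ k := by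
    funext x; simp
  constructor
  · rw [← hfun]; exact h1
  · have hval : Lmap (X ^ k) = t k := by rw [hLapp, hdiag k]; simp
    rw [← hval, h2, hfun]
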